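/- Let R be a commutative ring and L, S, c_1 ∈ R. In R[[t]], the coefficient of t^2 in 6(2Lt + 3LSt^2 − S^2t^2) · ((1 + St)(1 + 6Lt − 2St))^{-1} · (1 + c_1 t) equals 6(2c_1 L − 12L^2 + 5LS − S^2); moreover the coefficient of t^1 equals 12L. -/

import Mathlib

open PowerSeries

private lemma coeff_zero_mul' {R : Type*} [CommRing R] (φ ψ : R⟦X⟧) :
    coeff (R := R) 0 (φ * ψ) = coeff (R := R) 0 φ * coeff (R := R) 0 ψ := by
  rw [coeff_mul, Finset.Nat.sum_antidiagonal_eq_sum_range_succ_mk]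
  simp

private lemma coeff_one_mul' {R : Type*} [CommRing R] (φ ψ : R⟦X⟧) :
    coeff (R := R) 1 (φ * ψ) = coeff (R := R) 0 φ * coeff (R := R) 1 ψ + coeff (R := R) 1 φ * coeff (R := R) 0 ψ := by
  rw [coeff_mul, Finset.Nat.sum_antidiagonal_eq_sum_range_succ_mk]
  simp [Finset.sum_range_succ]

private lemma coeff_two_mul' {R : Type*} [CommRing R] (φ ψ : R⟦X⟧) :
    coeff (R := R) 2 (φ * ψ) = coeff (R := R) 0 φ * coeff (R := R) 2 ψ + coeff (R := R) 1 φ * coeff (R := R) 1 ψ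
      + coeff (R := R) 2 φ * coeff (R := R) 0 ψ := by
  rw [coeff_mul, Finset.Nat.sum_antidiagonal_eq_sum_range_succ_mk]
  simp [Finset.sum_range_succ]

/-- SU(2)-model generating function: coefficients of `t^2` and `t^1`. -/
theorem euler_su2_dim2 {R : Type*} [CommRing R] (L S c₁ : R) :
    (PowerSeries.coeff (R := R) 2)
      (6 * (2 * C (R := R) L * X + 3 * C (R := R) L * C (R := R) S * X ^ 2 - C (R := R) S ^ 2 * X ^ 2) *
        Ring.inverse ((1 + C (R := R) S * X) * (1 + 6 * C (R := R) L * X - 2 * C (R := R) S * X)) *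
        (1 + C (R := R) c₁ * X))
      = 6 * (2 * c₁ * L - 12 * L ^ 2 + 5 * L * S - S ^ 2) ∧
    (PowerSeries.coeff (R := R) 1)
      (6 * (2 * C (R := R) L * X + 3 * C (R := R) L * C (R := R) S * X ^ 2 - C (R := R) S ^ 2 * X ^ 2) *
        Ring.inverse ((1 + C (R := R) S * X) * (1 + 6 * C (R := R) L * X - 2 * C (R := R) S * X)) *
        (1 + C (R := R) c₁ * X))
      = 12 * L := by
  set u : R⟦X⟧ := (1 + C (R := R) S * X) * (1 + 6 * C (R := R) L * X - 2 * C (R := R) S * X) with hudef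
  have hu : u = 1 + C (R := R) (6*L - S) * X + C (R := R) (6*L*S - 2*S^2) * X^2 := by
    rw [hudef]; simp only [map_sub, map_mul, map_ofNat, map_pow]; ring
  have hu0 : coeff (R := R) 0 u = 1 := by rw [hu]; simp only [map_add, coeff_C_mul, coeff_one, coeff_X, coeff_X_pow, coeff_C]; norm_num
  have hu1 : coeff (R := R) 1 u = 6*L - S := by rw [hu]; simp only [map_add, coeff_C_mul, coeff_one, coeff_X, coeff_X_pow, coeff_C]; norm_num
  have hu2 : coeff (R := R) 2 u = 6*L*S - 2*S^2 := by rw [hu]; simp only [map_add, coeff_C_mul, coeff_one, coeff_X, coeff_X_pow, coeff_C]; norm_num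
  have hunit : IsUnit u := by
    rw [isUnit_iff_constantCoeff, ← coeff_zero_eq_constantCoeff_apply, hu0]
    exact isUnit_one
  set v : R⟦X⟧ := Ring.inverse u with hvdef
  have hmul : u * v = 1 := Ring.mul_inverse_cancel u hunit
  have hv0 : coeff (R := R) 0 v = 1 := by
    have := congrArg (coeff (R := R) 0) hmul
    rw [coeff_zero_mul', hu0, one_mul] at this
    simpa using this
  have hv1 : coeff (R := R) 1 v = S - 6*L := by
    have := congrArg (coeff (R := R) 1) hmul
    rw [coeff_one_mul', hu0, hu1, hv0] at this
    simp at this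
    linear_combination this
  have hv2 : coeff (R := R) 2 v = 36*L^2 - 18*L*S + 3*S^2 := by
    have := congrArg (coeff (R := R) 2) hmul
    rw [coeff_two_mul', hu0, hu1, hu2, hv0, hv1] at this
    simp at this
    linear_combination this
  set P : R⟦X⟧ := 6 * (2 * C (R := R) L * X + 3 * C (R := R) L * C (R := R) S * X ^ 2 - C (R := R) S ^ 2 * X ^ 2)
    with hPdef
  have hP : P = C (R := R) (12*L) * X + C (R := R) (18*L*S - 6*S^2) * X^2 := by
    rw [hPdef]; simp only [map_sub, map_mul, map_ofNat, map_pow]; ring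
  have hP0 : coeff (R := R) 0 P = 0 := by rw [hP]; simp only [map_add, coeff_C_mul, coeff_one, coeff_X, coeff_X_pow, coeff_C]; norm_num
  have hP1 : coeff (R := R) 1 P = 12*L := by rw [hP]; simp only [map_add, coeff_C_mul, coeff_one, coeff_X, coeff_X_pow, coeff_C]; norm_num
  have hP2 : coeff (R := R) 2 P = 18*L*S - 6*S^2 := by rw [hP]; simp only [map_add, coeff_C_mul, coeff_one, coeff_X, coeff_X_pow, coeff_C]; norm_num
  set Q : R⟦X⟧ := 1 + C (R := R) c₁ * X with hQdef
  have hQ0 : coeff (R := R) 0 Q = 1 := by simp [hQdef]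
  have hQ1 : coeff (R := R) 1 Q = c₁ := by simp [hQdef]
  have hQ2 : coeff (R := R) 2 Q = 0 := by simp [hQdef]
  constructor
  · rw [coeff_two_mul', coeff_two_mul', coeff_one_mul', coeff_zero_mul',
      hP0, hP1, hP2, hv0, hv1, hv2, hQ0, hQ1, hQ2]
    ring
  · rw [coeff_one_mul', coeff_one_mul', coeff_zero_mul',
      hP0, hP1, hv0, hv1, hQ0, hQ1]
    ring
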